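/- Let f, g be 2×2 complex matrices with fg ≠ gf and exp(t·f + g) = exp(t·f)·exp(g) for all t ∈ ℂ. Then there exist scalars σ, τ ∈ ℂ such that f' = f − σ·id and g' = g − τ·id satisfy: f' ≠ 0, f'² = 0, f'∘g' = 0, and tr(g') ∈ U where U = {u ∈ ℂ* : e^u = 1 + u}. -/

import Mathlib

open Matrix NormedSpace
open scoped Nat Real

noncomputable def CC (z : ℂ) : ℂ := ∑' n : ℕ, ((2*n)! : ℂ)⁻¹ * z ^ n
noncomputable def SS (z : ℂ) : ℂ := ∑' n : ℕ, ((2*n+1)! : ℂ)⁻¹ * z ^ n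

lemma hasSum_cosh' (z : ℂ) :
    HasSum (fun n : ℕ => ((2*n)! : ℂ)⁻¹ * z ^ (2*n)) (Complex.cosh z) := by
  have h := Complex.hasSum_cos' (-z * Complex.I)
  rw [show (-z * Complex.I * Complex.I) = z by rw [mul_assoc, Complex.I_mul_I]; ring] at h
  rw [show Complex.cos (-z * Complex.I) = Complex.cosh z by
    rw [neg_mul, Complex.cos_neg, Complex.cos_mul_I]] at h
  convert h using 2 with n
  rw [div_eq_inv_mul]

lemma hasSum_sinh' (z : ℂ) :
    HasSum (fun n : ℕ => ((2*n+1)! : ℂ)⁻¹ * z ^ (2*n+1)) (Complex.sinh z) := by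
  have h := (Complex.hasSum_sin' (-z * Complex.I)).mul_right Complex.I
  rw [show (-z * Complex.I * Complex.I) = z by rw [mul_assoc, Complex.I_mul_I]; ring] at h
  rw [show Complex.sin (-z * Complex.I) * Complex.I = Complex.sinh z by
    rw [neg_mul, Complex.sin_neg, Complex.sin_mul_I, neg_mul, mul_assoc, Complex.I_mul_I]; ring] at h
  convert h using 2 with n
  · rfl
  rw [div_mul_cancel₀ _ Complex.I_ne_zero, div_eq_inv_mul]

lemma hasSum_CC_sq (w : ℂ) :
    HasSum (fun n : ℕ => ((2*n)! : ℂ)⁻¹ * (w^2) ^ n) (Complex.cosh w) := by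
  convert hasSum_cosh' w using 2 with n
  rw [← pow_mul]

lemma CC_sq (w : ℂ) : CC (w^2) = Complex.cosh w := (hasSum_CC_sq w).tsum_eq

lemma summable_CC (z : ℂ) : Summable (fun n : ℕ => ((2*n)! : ℂ)⁻¹ * z ^ n) := by
  obtain ⟨w, hw⟩ := IsAlgClosed.exists_pow_nat_eq z (n := 2) (by norm_num)
  rw [← hw]
  exact (hasSum_CC_sq w).summable

lemma hasSum_CC (z : ℂ) : HasSum (fun n : ℕ => ((2*n)! : ℂ)⁻¹ * z ^ n) (CC z) :=
  (summable_CC z).hasSum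

lemma hasSum_SS_sq {w : ℂ} (hw0 : w ≠ 0) :
    HasSum (fun n : ℕ => ((2*n+1)! : ℂ)⁻¹ * (w^2) ^ n) (w⁻¹ * Complex.sinh w) := by
  have h := (hasSum_sinh' w).mul_left w⁻¹
  have e : (fun n : ℕ => w⁻¹ * (((2*n+1)! : ℂ)⁻¹ * w ^ (2*n+1)))
      = (fun n : ℕ => ((2*n+1)! : ℂ)⁻¹ * (w^2) ^ n) := by
    funext n
    rw [← pow_mul, pow_succ]
    field_simp
  rwa [e] at h

lemma SS_sq (w : ℂ) : w * SS (w^2) = Complex.sinh w := by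
  rcases eq_or_ne w 0 with rfl | hw
  · simp
  rw [SS, (hasSum_SS_sq hw).tsum_eq]
  field_simp

lemma summable_SS (z : ℂ) : Summable (fun n : ℕ => ((2*n+1)! : ℂ)⁻¹ * z ^ n) := by
  obtain ⟨w, hw⟩ := IsAlgClosed.exists_pow_nat_eq z (n := 2) (by norm_num)
  rcases eq_or_ne w 0 with rfl | hw0
  · rw [← hw]
    apply summable_of_ne_finset_zero (s := {0})
    intro n hn
    simp only [Finset.mem_singleton] at hn
    simp [zero_pow, hn]
  · rw [← hw]
    exact (hasSum_SS_sq hw0).summable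

lemma hasSum_SS (z : ℂ) : HasSum (fun n : ℕ => ((2*n+1)! : ℂ)⁻¹ * z ^ n) (SS z) :=
  (summable_SS z).hasSum

lemma CC_zero : CC 0 = 1 := by
  rw [CC, tsum_eq_single 0]
  · norm_num
  · intro n hn; simp [zero_pow hn]

lemma SS_zero : SS 0 = 1 := by
  rw [SS, tsum_eq_single 0]
  · norm_num
  · intro n hn; simp [zero_pow hn]

lemma CC_pyth (z : ℂ) : CC z ^ 2 - z * SS z ^ 2 = 1 := by
  obtain ⟨w, hw⟩ := IsAlgClosed.exists_pow_nat_eq z (n := 2) (by norm_num)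
  subst hw
  have h1 := CC_sq w
  have h2 := SS_sq w
  have h3 := Complex.cosh_sq_sub_sinh_sq w
  rw [← h1, ← h2] at h3
  linear_combination h3

lemma SS_negpisq : SS (-(π:ℂ)^2) = 0 := by
  have h : ((π:ℂ) * Complex.I)^2 = -(π:ℂ)^2 := by
    rw [mul_pow, Complex.I_sq]; ring
  have h2 := SS_sq ((π:ℂ) * Complex.I)
  rw [h, Complex.sinh_mul_I, ← Complex.ofReal_sin, Real.sin_pi] at h2
  simp only [Complex.ofReal_zero, zero_mul] at h2
  have hne : (π:ℂ) * Complex.I ≠ 0 :=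
    mul_ne_zero (Complex.ofReal_ne_zero.mpr Real.pi_ne_zero) Complex.I_ne_zero
  exact (mul_eq_zero.mp h2).resolve_left hne

lemma CC_negpisq : CC (-(π:ℂ)^2) = -1 := by
  have h : ((π:ℂ) * Complex.I)^2 = -(π:ℂ)^2 := by
    rw [mul_pow, Complex.I_sq]; ring
  have h2 := CC_sq ((π:ℂ) * Complex.I)
  rw [h, Complex.cosh_mul_I, ← Complex.ofReal_cos, Real.cos_pi] at h2
  simpa using h2

lemma CC_neg4pisq : CC (-(4:ℂ)*(π:ℂ)^2) = 1 := by
  have h : (((2*π:ℝ):ℂ) * Complex.I)^2 = -(4:ℂ)*(π:ℂ)^2 := by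
    rw [mul_pow, Complex.I_sq]; push_cast; ring
  have h2 := CC_sq (((2*π:ℝ):ℂ) * Complex.I)
  rw [h, Complex.cosh_mul_I, ← Complex.ofReal_cos, Real.cos_two_pi] at h2
  simpa using h2

abbrev M2 := Matrix (Fin 2) (Fin 2) ℂ

lemma exp_of_sq (M : M2) (δ : ℂ) (h : M * M = δ • (1 : M2)) :
    exp M = CC δ • (1 : M2) + SS δ • M := by
  letI : SeminormedRing M2 := Matrix.linftyOpSemiNormedRing
  letI : NormedRing M2 := Matrix.linftyOpNormedRing
  letI : NormedAlgebra ℂ M2 := Matrix.linftyOpNormedAlgebra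
  have heven : ∀ k : ℕ, M ^ (2*k) = δ ^ k • (1 : M2) := by
    intro k
    rw [pow_mul, show M^2 = δ • (1:M2) from by rw [sq]; exact h, smul_pow, one_pow]
  have hodd : ∀ k : ℕ, M ^ (2*k+1) = δ ^ k • M := by
    intro k
    rw [pow_succ, heven, smul_mul_assoc, one_mul]
  rw [exp_eq_tsum (𝕂 := ℂ)]
  refine HasSum.tsum_eq (HasSum.even_add_odd ?_ ?_)
  · have h2 := (hasSum_CC δ).smul_const (1 : M2)
    convert h2 using 2 with k
    · rfl
    rw [heven, smul_smul]
  · have h2 := (hasSum_SS δ).smul_const M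
    convert h2 using 2 with k
    · rfl
    rw [hodd, smul_smul]

lemma exp_scalar (c : ℂ) : exp (c • (1 : M2)) = Complex.exp c • (1 : M2) := by
  rw [exp_of_sq (c • (1:M2)) (c^2)
    (by rw [smul_mul_assoc, one_mul, smul_smul, ← sq]), CC_sq, smul_smul]
  rw [mul_comm (SS (c^2)) c, SS_sq, ← add_smul, Complex.cosh_add_sinh]

lemma exp_shift (A : M2) (c : ℂ) :
    exp (A + c • (1:M2)) = Complex.exp c • exp A := by
  rw [Matrix.exp_add_of_commute A (c • (1:M2)) ((Commute.one_right A).smul_right c),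
    exp_scalar, mul_smul_comm, mul_one]

lemma sq_of_trace_zero (M : M2) (h : M.trace = 0) : M * M = (- M.det) • (1 : M2) := by
  have h' : M 0 0 + M 1 1 = 0 := by rw [Matrix.trace_fin_two] at h; exact h
  ext i j
  fin_cases i <;> fin_cases j <;>
    simp [Matrix.mul_apply, Fin.sum_univ_two, Matrix.det_fin_two, Matrix.one_apply]
  · linear_combination (M 0 0) * h'
  · linear_combination (M 0 1) * h'
  · linear_combination (M 1 0) * h'
  · linear_combination (M 1 1) * h'

lemma det_add_eq (A B : M2) :
    (A + B).det = A.det + B.det + A.trace * B.trace - (A*B).trace := by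
  simp [Matrix.det_fin_two, Matrix.trace_fin_two, Matrix.mul_apply, Fin.sum_univ_two]
  ring

lemma anticomm (A B : M2) :
    A*B + B*A = A.trace • B + B.trace • A + ((A*B).trace - A.trace * B.trace) • (1:M2) := by
  ext i j
  fin_cases i <;> fin_cases j <;>
    simp [Matrix.mul_apply, Fin.sum_univ_two, Matrix.trace_fin_two, Matrix.one_apply] <;> ring

lemma smul_cancel {α β : ℂ} {A : M2} (hA : A ≠ 0) (h : α • A = β • A) : α = β := by
  by_contra hne
  have h2 := sub_eq_zero.mpr h
  rw [← sub_smul] at h2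
  rcases smul_eq_zero.mp h2 with h1 | h1
  · exact hne (sub_eq_zero.mp h1)
  · exact hA h1

lemma quad_root {a b c : ℂ} (ha : a ≠ 0) : ∃ t : ℂ, a*t^2 + b*t + c = 0 := by
  obtain ⟨r, hr⟩ := IsAlgClosed.exists_pow_nat_eq (b^2 - 4*a*c) (n := 2) (by norm_num)
  refine ⟨(-b + r)/(2*a), ?_⟩
  field_simp
  ring_nf
  linear_combination hr

lemma no_SS {ε w Δ₀ ν : ℂ} (hε : ε ≠ 0)
    (h : ∀ t : ℂ, SS (ε*t^2 + w*t + Δ₀) = Complex.exp (t*ν) * SS Δ₀) : False := by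
  rcases eq_or_ne (SS Δ₀) 0 with h0 | h0
  · obtain ⟨t, ht⟩ := quad_root (b := w) (c := Δ₀) hε
    have h1 := h t
    rw [ht, SS_zero, h0, mul_zero] at h1
    exact one_ne_zero h1
  · obtain ⟨t, ht⟩ := quad_root (b := w) (c := Δ₀ + (π:ℂ)^2) hε
    have h1 := h t
    rw [show ε*t^2 + w*t + Δ₀ = -(π:ℂ)^2 by linear_combination ht, SS_negpisq] at h1
    exact (mul_ne_zero (Complex.exp_ne_zero _) h0) h1.symm

set_option maxHeartbeats 2000000 in
theorem stmt_16 (f g : Matrix (Fin 2) (Fin 2) ℂ)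
    (hne : f * g ≠ g * f)
    (h : ∀ t : ℂ, exp (t • f + g) = exp (t • f) * exp g) :
    ∃ σ τ : ℂ,
      let f' := f - σ • (1 : Matrix (Fin 2) (Fin 2) ℂ)
      let g' := g - τ • (1 : Matrix (Fin 2) (Fin 2) ℂ)
      f' ≠ 0 ∧ f' ^ 2 = 0 ∧ f' * g' = 0 ∧
      g'.trace ≠ 0 ∧ Complex.exp g'.trace = 1 + g'.trace := by
  classical
  obtain ⟨σ, hσdef⟩ : ∃ c : ℂ, c = f.trace / 2 := ⟨_, rfl⟩
  obtain ⟨F, hFdef⟩ : ∃ A : M2, A = f - σ • 1 := ⟨_, rfl⟩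
  have hFtr : F.trace = 0 := by
    rw [hFdef, Matrix.trace_sub, Matrix.trace_smul, Matrix.trace_one]
    simp [hσdef, smul_eq_mul]
  -- transfer hypotheses
  have h0 : ∀ t : ℂ, exp (t • F + g) = exp (t • F) * exp g := by
    intro t
    have e1 : t • f + g = (t • F + g) + (t*σ) • (1:M2) := by rw [hFdef]; module
    have e2 : t • f = t • F + (t*σ) • (1:M2) := by rw [hFdef]; module
    have h3 := h t
    rw [e1, exp_shift, e2, exp_shift, smul_mul_assoc] at h3
    exact smul_right_injective M2 (Complex.exp_ne_zero (t*σ)) h3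
  have hne' : F * g ≠ g * F := by
    intro hc
    apply hne
    have e3 : f*g - g*f = F*g - g*F := by rw [hFdef]; noncomm_ring
    rw [hc, sub_self] at e3
    exact sub_eq_zero.mp e3
  have hF0 : F ≠ 0 := by
    intro hc
    exact hne' (by rw [hc, zero_mul, mul_zero])
  -- normalize g
  obtain ⟨T, hTdef⟩ : ∃ c : ℂ, c = g.trace := ⟨_, rfl⟩
  obtain ⟨G, hGdef⟩ : ∃ A : M2, A = g - (T/2) • 1 := ⟨_, rfl⟩
  have hGtr : G.trace = 0 := by
    rw [hGdef, Matrix.trace_sub, Matrix.trace_smul, Matrix.trace_one]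
    simp [hTdef, smul_eq_mul]
  obtain ⟨d0, hd0def⟩ : ∃ c : ℂ, c = - G.det := ⟨_, rfl⟩
  have hG2 : G * G = d0 • (1:M2) := by rw [hd0def]; exact sq_of_trace_zero G hGtr
  obtain ⟨eps, hepsdef⟩ : ∃ c : ℂ, c = - F.det := ⟨_, rfl⟩
  have hF2 : F * F = eps • (1:M2) := by rw [hepsdef]; exact sq_of_trace_zero F hFtr
  obtain ⟨w, hwdef⟩ : ∃ c : ℂ, c = (F*G).trace := ⟨_, rfl⟩
  have hneG : F * G ≠ G * F := by
    intro hc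
    apply hne'
    have e3 : F*g - g*F = F*G - G*F := by rw [hGdef]; noncomm_ring
    rw [hc, sub_self] at e3
    exact sub_eq_zero.mp e3
  -- the quadratic
  have hsq : ∀ t : ℂ, (t•F+G)*(t•F+G) = (eps*t^2+w*t+d0) • (1:M2) := by
    intro t
    have htr : (t•F+G).trace = 0 := by
      rw [Matrix.trace_add, Matrix.trace_smul, hFtr, hGtr, smul_zero, add_zero]
    have hdet : -(t•F+G).det = eps*t^2+w*t+d0 := by
      rw [det_add_eq, Matrix.det_smul, Matrix.trace_smul, hFtr, smul_zero, zero_mul,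
        smul_mul_assoc, Matrix.trace_smul]
      simp [hepsdef, hd0def, hwdef, smul_eq_mul, Fintype.card_fin]
      ring
    rw [sq_of_trace_zero _ htr, hdet]
  have hexpg : exp g = Complex.exp (T/2) • (CC d0 • (1:M2) + SS d0 • G) := by
    have e4 : g = G + (T/2) • (1:M2) := by rw [hGdef]; module
    rw [e4, exp_shift, exp_of_sq G d0 hG2]
  have key : ∀ t : ℂ, CC (eps*t^2+w*t+d0) • (1:M2) + SS (eps*t^2+w*t+d0) • (t•F+G)
      = exp (t•F) * (CC d0 • (1:M2) + SS d0 • G) := by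
    intro t
    have e5 : t•F + g = (t•F + G) + (T/2) • (1:M2) := by rw [hGdef]; module
    have h3 := h0 t
    rw [e5, exp_shift, hexpg, exp_of_sq (t•F+G) _ (hsq t), mul_smul_comm] at h3
    exact smul_right_injective M2 (Complex.exp_ne_zero _) h3
  -- Step A : eps = 0
  have heps0 : eps = 0 := by
    by_contra heps0
    obtain ⟨mu, hmu⟩ := IsAlgClosed.exists_pow_nat_eq eps (n := 2) (by norm_num)
    have hmu0 : mu ≠ 0 := by
      intro hc
      exact heps0 (by rw [← hmu, hc]; ring)
    have hFF : F * F = (mu^2) • (1:M2) := by rw [hF2, hmu]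
    have hexp_tF : ∀ t : ℂ, exp (t•F)
        = Complex.cosh (t*mu) • (1:M2) + (Complex.sinh (t*mu)/mu) • F := by
      intro t
      have hsq' : (t•F)*(t•F) = ((t*mu)^2) • (1:M2) := by
        rw [smul_mul_assoc, mul_smul_comm, hFF, smul_smul, smul_smul]
        congr 1
        ring
      have h2 : SS ((t*mu)^2) * t = Complex.sinh (t*mu)/mu := by
        have h3 := SS_sq (t*mu)
        field_simp
        rw [mul_pow] at h3
        linear_combination h3
      rw [exp_of_sq _ _ hsq', CC_sq, smul_smul, h2]
    obtain ⟨P, hPdef⟩ : ∃ A : M2, A = (2⁻¹ : ℂ) • (1 + mu⁻¹ • F) := ⟨_, rfl⟩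
    obtain ⟨Q, hQdef⟩ : ∃ A : M2, A = (2⁻¹ : ℂ) • (1 - mu⁻¹ • F) := ⟨_, rfl⟩
    have hPQ : P * Q = 0 := by
      rw [hPdef, hQdef]
      simp only [smul_mul_assoc, mul_smul_comm, mul_add, add_mul, mul_sub, sub_mul, one_mul,
        mul_one, smul_smul, smul_add, smul_sub, hFF]
      match_scalars <;> field_simp <;> ring
    have hQP : Q * P = 0 := by
      rw [hPdef, hQdef]
      simp only [smul_mul_assoc, mul_smul_comm, mul_add, add_mul, mul_sub, sub_mul, one_mul,
        mul_one, smul_smul, smul_add, smul_sub, hFF]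
      match_scalars <;> field_simp <;> ring
    have hPF : P * F = mu • P := by
      rw [hPdef]
      simp only [smul_mul_assoc, mul_smul_comm, mul_add, add_mul, mul_sub, sub_mul, one_mul,
        mul_one, smul_smul, smul_add, smul_sub, hFF]
      match_scalars <;> field_simp <;> ring
    have hQF : Q * F = (-mu) • Q := by
      rw [hQdef]
      simp only [smul_mul_assoc, mul_smul_comm, mul_add, add_mul, mul_sub, sub_mul, one_mul,
        mul_one, smul_smul, smul_add, smul_sub, hFF]
      match_scalars <;> field_simp <;> ring
    have hPexp : ∀ t : ℂ, P * exp (t•F) = Complex.exp (t*mu) • P := by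
      intro t
      rw [hexp_tF, mul_add, mul_smul_comm, mul_one, mul_smul_comm, hPF, smul_smul,
        div_mul_cancel₀ _ hmu0, ← add_smul, Complex.cosh_add_sinh]
    have hQexp : ∀ t : ℂ, Q * exp (t•F) = Complex.exp (t * -mu) • Q := by
      intro t
      rw [hexp_tF, mul_add, mul_smul_comm, mul_one, mul_smul_comm, hQF, smul_smul]
      rw [show Complex.sinh (t*mu)/mu * -mu = -Complex.sinh (t*mu) by field_simp]
      rw [neg_smul, ← sub_eq_add_neg, ← sub_smul, Complex.cosh_sub_sinh, mul_neg]
    have hPFQ : P * (F * Q) = 0 := by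
      rw [← mul_assoc, hPF, smul_mul_assoc, hPQ, smul_zero]
    have hQFP : Q * (F * P) = 0 := by
      rw [← mul_assoc, hQF, smul_mul_assoc, hQP, smul_zero]
    have formL : ∀ (a b : ℂ) (A : M2), P * ((a • (1:M2) + b • A) * Q) = b • (P*(A*Q)) := by
      intro a b A
      rw [add_mul, smul_mul_assoc, smul_mul_assoc, one_mul, mul_add, mul_smul_comm,
        mul_smul_comm, hPQ, smul_zero, zero_add]
    have formLY : ∀ (a b : ℂ) (A : M2), Q * ((a • (1:M2) + b • A) * P) = b • (Q*(A*P)) := by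
      intro a b A
      rw [add_mul, smul_mul_assoc, smul_mul_assoc, one_mul, mul_add, mul_smul_comm,
        mul_smul_comm, hQP, smul_zero, zero_add]
    have formA : ∀ t : ℂ, P * ((t•F+G) * Q) = P*(G*Q) := by
      intro t
      rw [add_mul, smul_mul_assoc, mul_add, mul_smul_comm, hPFQ, smul_zero, zero_add]
    have formAY : ∀ t : ℂ, Q * ((t•F+G) * P) = Q*(G*P) := by
      intro t
      rw [add_mul, smul_mul_assoc, mul_add, mul_smul_comm, hQFP, smul_zero, zero_add]
    have hkeyX : ∀ t : ℂ, SS (eps*t^2+w*t+d0) • (P*(G*Q))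
        = (Complex.exp (t*mu) * SS d0) • (P*(G*Q)) := by
      intro t
      have h3 := congrArg (fun (A : M2) => P * (A * Q)) (key t)
      rw [formL, formA, mul_assoc, ← mul_assoc P (exp (t • F)), hPexp, smul_mul_assoc, formL,
        smul_smul] at h3
      exact h3
    have hkeyY : ∀ t : ℂ, SS (eps*t^2+w*t+d0) • (Q*(G*P))
        = (Complex.exp (t*(-mu)) * SS d0) • (Q*(G*P)) := by
      intro t
      have h3 := congrArg (fun (A : M2) => Q * (A * P)) (key t)
      rw [formLY, formAY, mul_assoc, ← mul_assoc Q (exp (t • F)), hQexp, smul_mul_assoc, formLY,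
        smul_smul] at h3
      exact h3
    have hXY : P*(G*Q) ≠ 0 ∨ Q*(G*P) ≠ 0 := by
      by_contra hc
      push_neg at hc
      apply hneG
      have hiden : F*G - G*F = (2*mu) • (P*(G*Q) - Q*(G*P)) := by
        rw [hPdef, hQdef]
        simp only [smul_mul_assoc, mul_smul_comm, mul_add, add_mul, mul_sub, sub_mul, one_mul,
          mul_one, smul_smul, smul_add, smul_sub]
        match_scalars <;> field_simp <;> ring
      rw [hc.1, hc.2, sub_self, smul_zero] at hiden
      exact sub_eq_zero.mp hiden
    rcases hXY with hX | hY
    · exact no_SS heps0 (fun t => smul_cancel hX (hkeyX t))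
    · exact no_SS heps0 (fun t => smul_cancel hY (hkeyY t))
  -- Step B
  have hFF0 : F * F = 0 := by rw [hF2, heps0, zero_smul]
  have hexp1 : ∀ t : ℂ, exp (t•F) = 1 + t•F := by
    intro t
    have hsq' : (t•F)*(t•F) = (0:ℂ) • (1:M2) := by
      rw [smul_mul_assoc, mul_smul_comm, hFF0, smul_zero, smul_zero, zero_smul]
    rw [exp_of_sq _ _ hsq', CC_zero, SS_zero, one_smul, one_smul]
  have key2 : ∀ t : ℂ, CC (w*t+d0) • (1:M2) + SS (w*t+d0) • (t•F+G)
      = CC d0 • (1:M2) + SS d0 • G + (t*CC d0) • F + (t*SS d0) • (F*G) := by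
    intro t
    have h3 := key t
    rw [heps0, hexp1] at h3
    rw [show (0:ℂ)*t^2+w*t+d0 = w*t+d0 by ring] at h3
    rw [h3]
    rw [add_mul, one_mul, smul_mul_assoc, mul_add, mul_smul_comm, mul_smul_comm, mul_one]
    rw [smul_add, smul_smul, smul_smul]
    module
  -- trace equation
  have htr0 : ∀ t : ℂ, 2 * CC (w*t+d0) = 2 * CC d0 + t * SS d0 * w := by
    intro t
    have h3 := congrArg Matrix.trace (key2 t)
    simp only [Matrix.trace_add, Matrix.trace_smul, Matrix.trace_one, hFtr, hGtr, ← hwdef,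
      smul_eq_mul, Fintype.card_fin, smul_zero] at h3
    push_cast at h3
    linear_combination h3
  have hπ : ((π:ℝ):ℂ) ≠ 0 := Complex.ofReal_ne_zero.mpr Real.pi_ne_zero
  have hw0 : w = 0 := by
    by_contra hwne
    have htr' : ∀ z : ℂ, 2 * CC z = 2 * CC d0 + (z - d0) * SS d0 := by
      intro z
      have h3 := htr0 ((z - d0)/w)
      rw [show w*((z-d0)/w)+d0 = z by field_simp; ring] at h3
      rw [h3]
      field_simp
    have e0 := htr' 0
    rw [CC_zero] at e0
    have e1 := htr' (-(π:ℂ)^2)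
    rw [CC_negpisq] at e1
    have e2 := htr' (-(4:ℂ)*(π:ℂ)^2)
    rw [CC_neg4pisq] at e2
    have hS0 : SS d0 = 0 := by
      have h4 : (4:ℂ)*(π:ℂ)^2 * SS d0 = 0 := by linear_combination e2 - e0
      rcases mul_eq_zero.mp h4 with h5 | h5
      · exfalso
        rcases mul_eq_zero.mp h5 with h6 | h6
        · norm_num at h6
        · exact hπ (pow_eq_zero_iff (two_ne_zero) |>.mp h6)
      · exact h5
    rw [hS0] at e0 e1
    have h6 : (4:ℂ) = 0 := by linear_combination e0 - e1
    norm_num at h6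
  have key3 : ∀ t : ℂ, CC d0 • (1:M2) + SS d0 • (t•F+G)
      = CC d0 • (1:M2) + SS d0 • G + (t*CC d0) • F + (t*SS d0) • (F*G) := by
    intro t
    have h3 := key2 t
    rw [hw0, zero_mul, zero_add] at h3
    exact h3
  have eqf : SS d0 • (F*G) = (SS d0 - CC d0) • F := by
    have h3 := key3 1
    linear_combination (norm := module) -h3
  have hS0ne : SS d0 ≠ 0 := by
    intro hc
    rw [hc] at eqf
    rw [zero_smul] at eqf
    have h4 : CC d0 = 0 := by
      rcases smul_eq_zero.mp eqf.symm with h4 | h4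
      · linear_combination -h4
      · exact absurd h4 hF0
    have h6 := CC_pyth d0
    rw [h4, hc] at h6
    simp at h6
  obtain ⟨κ, hκdef⟩ : ∃ c : ℂ, c = (SS d0 - CC d0)/SS d0 := ⟨_, rfl⟩
  have hFG : F*G = κ • F := by
    have h5 : SS d0 • (F*G) = SS d0 • (κ • F) := by
      rw [eqf, smul_smul, hκdef]
      congr 1
      field_simp
    exact smul_right_injective M2 hS0ne h5
  have hanti : F*G + G*F = 0 := by
    have h3 := anticomm F G
    rw [hFtr, hGtr, ← hwdef, hw0] at h3
    simpa using h3
  have hGF : G*F = (-κ) • F := by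
    have h3 : G*F = -(F*G) := by linear_combination (norm := module) hanti
    rw [h3, hFG, neg_smul]
  have hκ0 : κ ≠ 0 := by
    intro hc
    apply hneG
    rw [hFG, hGF, hc, neg_zero]
  have hd0κ : d0 = κ^2 := by
    have h1 : F * (G * G) = d0 • F := by rw [hG2, mul_smul_comm, mul_one]
    have h2 : F * (G * G) = (κ*κ) • F := by
      rw [← mul_assoc, hFG, smul_mul_assoc, hFG, smul_smul]
    have h3 := smul_cancel hF0 (h1.symm.trans h2)
    rw [h3]; ring
  have hC : CC d0 = Complex.cosh κ := by rw [hd0κ, CC_sq]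
  have hSκ : κ * SS d0 = Complex.sinh κ := by rw [hd0κ]; exact SS_sq κ
  have hκS : κ * SS d0 = SS d0 - CC d0 := by
    rw [hκdef]
    exact div_mul_cancel₀ _ hS0ne
  have hmain : κ * Complex.sinh κ = Complex.sinh κ - κ * Complex.cosh κ := by
    rw [← hSκ, ← hC]
    linear_combination κ * hκS
  have hexpu : Complex.exp (-(2*κ)) = 1 - 2*κ := by
    have hE : Complex.exp κ ≠ 0 := Complex.exp_ne_zero κ
    rw [Complex.sinh, Complex.cosh] at hmain
    have h4 : Complex.exp (-(2*κ)) * Complex.exp κ = Complex.exp (-κ) := by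
      rw [← Complex.exp_add]; ring_nf
    have h5 : Complex.exp (-κ) = (1 - 2*κ) * Complex.exp κ := by
      linear_combination 2*hmain
    have h6 : Complex.exp (-(2*κ)) * Complex.exp κ = (1-2*κ) * Complex.exp κ := by
      rw [h4, h5]
    exact mul_right_cancel₀ hE h6
  -- assemble
  have c1 : f - σ • (1:M2) ≠ 0 := by rw [← hFdef]; exact hF0
  have c2 : (f - σ • (1:M2))^2 = 0 := by rw [← hFdef, sq]; exact hFF0
  have c3 : (f - σ • (1:M2)) * (g - (κ + T/2) • (1:M2)) = 0 := by
    rw [← hFdef]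
    have h3 : F * G = κ • F := hFG
    rw [hGdef] at h3
    have h4 : F * (g - (κ+T/2) • (1:M2)) = F * (g - (T/2) • (1:M2)) - κ • F := by
      simp only [mul_sub, mul_smul_comm, mul_one]
      module
    rw [h4, h3, sub_self]
  have ctr : (g - (κ + T/2) • (1:M2)).trace = -(2*κ) := by
    rw [Matrix.trace_sub, Matrix.trace_smul, Matrix.trace_one, ← hTdef]
    simp only [smul_eq_mul, Fintype.card_fin]
    push_cast
    ring
  have c4 : (g - (κ + T/2) • (1:M2)).trace ≠ 0 := by
    rw [ctr]
    simpa using hκ0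
  have c5 : Complex.exp (g - (κ + T/2) • (1:M2)).trace
      = 1 + (g - (κ + T/2) • (1:M2)).trace := by
    rw [ctr, hexpu]
    ring
  exact ⟨σ, κ + T/2, c1, c2, c3, c4, c5⟩
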